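/- arXiv:2203.05085 — 6 statements merged into one kernel-verified Lean document; each statement's English description precedes it below -/
import Mathlib

section
/- With the ToyDown post-processed counts and errors as defined, the root error satisfies E_root = L_root, and for every non-leaf node h and every child h_i of h (1 ≤ i ≤ n(h)), the error satisfies E_{h_i} = L_{h_i} + (1/n(h)) · (E_h − Σ_{j=1}^{n(h)} L_{h_j}). -/
open Finset MeasureTheory ProbabilityTheory

structure Hierarchy where
  Node : Type
  fintypeNode : Fintype Node
  decEqNode : DecidableEq Node
  d : ℕ
  d_pos : 1 ≤ d
  root : Node
  level : Node → ℕ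
  parent : Node → Node
  level_pos : ∀ h, 1 ≤ level h
  level_le : ∀ h, level h ≤ d
  level_root : level root = 1
  root_unique : ∀ h, level h = 1 → h = root
  parent_level : ∀ h, h ≠ root → level (parent h) + 1 = level h
  child_exists : ∀ h, level h < d → ∃ c, c ≠ root ∧ parent c = h

attribute [instance] Hierarchy.fintypeNode Hierarchy.decEqNode

namespace Hierarchy

variable (H : Hierarchy)

def children (h : H.Node) : Finset H.Node :=
  Finset.univ.filter fun c => c ≠ H.root ∧ H.parent c = h

def levelSet (ℓ : ℕ) : Finset H.Node :=
  Finset.univ.filter fun h => H.level h = ℓ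

def leaves : Finset H.Node := H.levelSet H.d

def Consistent (a : H.Node → ℝ) : Prop :=
  ∀ h, H.level h < H.d → a h = ∑ c ∈ H.children h, a c

def IsToyDown (a L α : H.Node → ℝ) : Prop :=
  α H.root = a H.root + L H.root ∧
  ∀ h, H.level h < H.d →
    (∑ c ∈ H.children h, α c) = α h ∧
    ∀ x : H.Node → ℝ, (∑ c ∈ H.children h, x c) = α h →
      (∃ c ∈ H.children h, x c ≠ α c) →
      ∑ c ∈ H.children h, (α c - (a c + L c))^2 <
        ∑ c ∈ H.children h, (x c - (a c + L c))^2

def IsWeights (D : Finset H.Node) (w : H.Node → ℝ) : Prop :=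
  (∀ h, H.level h = H.d → w h = if h ∈ D then 1 else 0) ∧
  (∀ h, H.level h < H.d → w h = (∑ c ∈ H.children h, w c) / ((H.children h).card : ℝ))

def frag (w : H.Node → ℝ) : ℝ :=
  ∑ h ∈ Finset.univ.filter (fun h => h ≠ H.root), (w h - w (H.parent h))^2

end Hierarchy


/-- ToyDown error recursion: the root error equals the root noise, and the error at a
child `c` of a non-leaf `h` is `L_c + (1/n(h))·(E_h − Σ_j L_{h_j})`. -/
theorem toydown_error_recursion (H : Hierarchy) (a L α : H.Node → ℝ)
    (hcons : H.Consistent a) (htd : H.IsToyDown a L α) :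
    α H.root - a H.root = L H.root ∧
      ∀ h, H.level h < H.d → ∀ c ∈ H.children h,
        α c - a c =
          L c + (1 / ((H.children h).card : ℝ)) *
            ((α h - a h) - ∑ j ∈ H.children h, L j) := by
  obtain ⟨hroot, hmin⟩ := htd
  refine ⟨by rw [hroot]; ring, ?_⟩
  intro h hlt c hc
  obtain ⟨hsum, hstrict⟩ := hmin h hlt
  have hne : (H.children h).Nonempty := by
    obtain ⟨c', hc1, hc2⟩ := H.child_exists h hlt
    exact ⟨c', Finset.mem_filter.mpr ⟨Finset.mem_univ _, hc1, hc2⟩⟩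
  have hn : ((H.children h).card : ℝ) ≠ 0 := by
    exact_mod_cast Finset.card_ne_zero_of_mem hne.choose_spec
  set n : ℝ := ((H.children h).card : ℝ) with hndef
  set t : ℝ := (α h - ∑ j ∈ H.children h, (a j + L j)) / n with ht
  set x : H.Node → ℝ := fun j => a j + L j + t with hx
  have hxsum : (∑ j ∈ H.children h, x j) = α h := by
    rw [hx]
    simp only [Finset.sum_add_distrib, Finset.sum_const, nsmul_eq_mul, ht]
    rw [← hndef]
    field_simp
    ring
  have decompose : ∀ y : H.Node → ℝ, (∑ j ∈ H.children h, y j) = α h →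
      ∑ j ∈ H.children h, (y j - (a j + L j))^2
        = (∑ j ∈ H.children h, (y j - x j)^2) + n * t^2 := by
    intro y hy
    have h1 : ∀ j ∈ H.children h, (y j - (a j + L j))^2
        = (y j - x j)^2 + 2*t*(y j - x j) + t^2 := by
      intro j _; simp only [hx]; ring
    rw [Finset.sum_congr rfl h1]
    simp only [Finset.sum_add_distrib, ← Finset.mul_sum, Finset.sum_sub_distrib,
      hy, hxsum, Finset.sum_const, nsmul_eq_mul]
    rw [← hndef]
    ring
  have key : ∀ j ∈ H.children h, α j = x j := by
    by_contra hcon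
    push_neg at hcon
    obtain ⟨j, hj, hjne⟩ := hcon
    have hlt2 := hstrict x hxsum ⟨j, hj, fun e => hjne e.symm⟩
    rw [decompose α hsum, decompose x hxsum] at hlt2
    have hz : ∑ j ∈ H.children h, (x j - x j)^2 = 0 := by simp
    rw [hz] at hlt2
    have hpos : (0:ℝ) ≤ ∑ j ∈ H.children h, (α j - x j)^2 :=
      Finset.sum_nonneg fun j _ => sq_nonneg _
    linarith
  have hac := key c hc
  have hsa : ∑ j ∈ H.children h, (a j + L j)
      = a h + ∑ j ∈ H.children h, L j := by
    rw [Finset.sum_add_distrib, hcons h hlt]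
  rw [hac, hx]
  simp only [ht, hsa]
  field_simp
  ring
end

section
/- Let D ⊆ H_d be a district with associated weights {w_h}. Then the district error satisfies the exact identity E_D = w_root · L_root + Σ_{h ∈ H, h ≠ root} (w_h − w_{ĥ}) · L_h. -/
open Finset MeasureTheory ProbabilityTheory

namespace Hierarchy

variable (H : Hierarchy)

lemma mem_children' {c h : H.Node} : c ∈ H.children h ↔ c ≠ H.root ∧ H.parent c = h := by
  simp [children]

lemma level_child {c h : H.Node} (hc : c ∈ H.children h) : H.level c = H.level h + 1 := by
  rw [mem_children'] at hc
  have := H.parent_level c hc.1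
  rw [hc.2] at this; omega

lemma children_nonempty {h : H.Node} (hh : H.level h < H.d) : (H.children h).Nonempty := by
  obtain ⟨c, hc⟩ := H.child_exists h hh
  exact ⟨c, (H.mem_children').2 hc⟩

lemma residual_const (a L α : H.Node → ℝ) (htd : H.IsToyDown a L α)
    {h : H.Node} (hh : H.level h < H.d) {c₁ c₂ : H.Node}
    (h₁ : c₁ ∈ H.children h) (h₂ : c₂ ∈ H.children h) :
    α c₁ - (a c₁ + L c₁) = α c₂ - (a c₂ + L c₂) := by
  by_contra hne
  have hcc : c₁ ≠ c₂ := by rintro rfl; exact hne rfl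
  set u := α c₁ - (a c₁ + L c₁) with hu
  set v := α c₂ - (a c₂ + L c₂) with hv
  set t : ℝ := (v - u) / 2 with ht
  have htne : t ≠ 0 := by
    rw [ht]; intro hc
    apply hne; have : v - u = 0 := by linarith
    linarith
  set x : H.Node → ℝ := fun c => α c + (if c = c₁ then t else 0) - (if c = c₂ then t else 0)
    with hx
  obtain ⟨hsum, hmin⟩ := htd.2 h hh
  have hxsum : (∑ c ∈ H.children h, x c) = α h := by
    simp only [hx, Finset.sum_sub_distrib, Finset.sum_add_distrib,
      Finset.sum_ite_eq' (H.children h), h₁, h₂, if_pos, hsum]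
    ring
  have hxc1 : x c₁ = α c₁ + t := by
    simp [hx, hcc]
  have hxc2 : x c₂ = α c₂ - t := by
    simp [hx, Ne.symm hcc]
  have hxne : ∃ c ∈ H.children h, x c ≠ α c := by
    refine ⟨c₁, h₁, ?_⟩
    rw [hxc1]
    intro hc; apply htne; linarith
  have hlt := hmin x hxsum hxne
  have hdiff : ∑ c ∈ H.children h, ((x c - (a c + L c))^2 - (α c - (a c + L c))^2)
      = ((u + t)^2 - u^2) + ((v - t)^2 - v^2) := by
    rw [← Finset.sum_subset (show ({c₁, c₂} : Finset H.Node) ⊆ H.children h by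
        intro c hc; simp at hc; rcases hc with rfl | rfl <;> assumption)]
    · rw [Finset.sum_pair hcc, hxc1, hxc2, hu, hv]
      ring
    · intro c hc hcn
      simp only [Finset.mem_insert, Finset.mem_singleton, not_or] at hcn
      simp [hx, if_neg hcn.1, if_neg hcn.2]
  rw [Finset.sum_sub_distrib] at hdiff
  have hpos : (0:ℝ) < ((u + t)^2 - u^2) + ((v - t)^2 - v^2) := by
    rw [← hdiff]; linarith
  have h0 : u - v ≠ 0 := sub_ne_zero.mpr hne
  have hq : 0 < (u - v)^2 := lt_of_le_of_ne (sq_nonneg _) (Ne.symm (pow_ne_zero 2 h0))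
  rw [ht] at hpos
  nlinarith [hpos, hq]

lemma child_error (a L α : H.Node → ℝ) (hcons : H.Consistent a) (htd : H.IsToyDown a L α)
    {h : H.Node} (hh : H.level h < H.d) {c : H.Node} (hc : c ∈ H.children h) :
    α c - a c = L c + ((α h - a h) - ∑ c' ∈ H.children h, L c') / ((H.children h).card : ℝ) := by
  obtain ⟨hsum, _⟩ := htd.2 h hh
  have hne : (H.children h).Nonempty := H.children_nonempty hh
  have hcard : (0:ℝ) < ((H.children h).card : ℝ) := by
    exact_mod_cast Finset.card_pos.mpr hne
  set K := α c - (a c + L c) with hK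
  have hconst : ∀ c' ∈ H.children h, α c' - (a c' + L c') = K :=
    fun c' hc' => H.residual_const a L α htd hh hc' hc
  have hsumres : ∑ c' ∈ H.children h, (α c' - (a c' + L c')) = ((H.children h).card : ℝ) * K := by
    rw [Finset.sum_congr rfl hconst, Finset.sum_const, nsmul_eq_mul]
  have hsuma : ∑ c' ∈ H.children h, a c' = a h := (hcons h hh).symm
  have : α h - a h - ∑ c' ∈ H.children h, L c' = ((H.children h).card : ℝ) * K := by
    rw [← hsumres]
    rw [← hsum, ← hsuma]
    rw [Finset.sum_sub_distrib, Finset.sum_add_distrib]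
    ring
  have hKval : K = ((α h - a h) - ∑ c' ∈ H.children h, L c') / ((H.children h).card : ℝ) := by
    field_simp
    linarith [this]
  rw [hK] at hKval
  linarith [hKval]

lemma parent_step (a L α : H.Node → ℝ) (hcons : H.Consistent a) (htd : H.IsToyDown a L α)
    (D : Finset H.Node) (w : H.Node → ℝ) (hw : H.IsWeights D w)
    {p : H.Node} (hp : H.level p < H.d) :
    ∑ c ∈ H.children p, w c * (α c - a c) =
      w p * (α p - a p) + ∑ c ∈ H.children p, (w c - w p) * L c := by
  have hne : (H.children p).Nonempty := H.children_nonempty hp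
  have hcard : (0:ℝ) < ((H.children p).card : ℝ) := by
    exact_mod_cast Finset.card_pos.mpr hne
  set n : ℝ := ((H.children p).card : ℝ) with hn
  set S : ℝ := ∑ c' ∈ H.children p, L c' with hS
  set K : ℝ := ((α p - a p) - S) / n with hKd
  have h1 : ∀ c ∈ H.children p, w c * (α c - a c) = w c * L c + w c * K := by
    intro c hc
    rw [H.child_error a L α hcons htd hp hc]; ring
  rw [Finset.sum_congr rfl h1, Finset.sum_add_distrib]
  have hsw : ∑ c ∈ H.children p, w c * K = (n * w p) * K := by
    rw [← Finset.sum_mul]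
    congr 1
    have := (hw.2 p hp)
    rw [this, ← hn]; field_simp
  rw [hsw]
  have h2 : ∑ c ∈ H.children p, (w c - w p) * L c
      = (∑ c ∈ H.children p, w c * L c) - w p * S := by
    rw [hS, Finset.mul_sum, ← Finset.sum_sub_distrib]
    apply Finset.sum_congr rfl; intro c hc; ring
  rw [h2]
  have h3 : n * K = (α p - a p) - S := by
    rw [hKd]; field_simp
  have : (n * w p) * K = w p * ((α p - a p) - S) := by
    rw [← h3]; ring
  rw [this]; ring

lemma level_sum (a L α : H.Node → ℝ) (hcons : H.Consistent a) (htd : H.IsToyDown a L α)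
    (D : Finset H.Node) (w : H.Node → ℝ) (hw : H.IsWeights D w) :
    ∀ ℓ, 1 ≤ ℓ → ℓ ≤ H.d →
    ∑ h ∈ H.levelSet ℓ, w h * (α h - a h) =
      w H.root * L H.root +
        ∑ h ∈ Finset.univ.filter (fun h => h ≠ H.root ∧ H.level h ≤ ℓ),
          (w h - w (H.parent h)) * L h := by
  intro ℓ
  induction ℓ with
  | zero => omega
  | succ m ih =>
    intro _ hle
    rcases Nat.eq_or_lt_of_le (show 1 ≤ m + 1 by omega) with h1 | h1
    · -- base case : m = 0
      have hm : m = 0 := by omega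
      subst hm
      have hset : H.levelSet 1 = {H.root} := by
        ext h
        simp only [levelSet, Finset.mem_filter, Finset.mem_univ, true_and,
          Finset.mem_singleton]
        constructor
        · exact H.root_unique h
        · rintro rfl; exact H.level_root
      have hempty : Finset.univ.filter (fun h => h ≠ H.root ∧ H.level h ≤ 1) = ∅ := by
        ext h
        simp only [Finset.mem_filter, Finset.mem_univ, true_and, Finset.notMem_empty,
          iff_false, not_and]
        intro hne hle1
        exact hne (H.root_unique h (by have := H.level_pos h; omega))
      rw [hset, hempty, Finset.sum_singleton, Finset.sum_empty, htd.1]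
      ring
    · -- inductive step: m ≥ 1
      have hm1 : 1 ≤ m := by omega
      have hmd : m < H.d := by omega
      have key := ih hm1 (by omega)
      -- fiberwise decomposition
      have hroot_ne : ∀ c ∈ H.levelSet (m+1), c ≠ H.root := by
        intro c hc
        simp only [levelSet, Finset.mem_filter] at hc
        intro hcr; rw [hcr, H.level_root] at hc; omega
      have hmaps : ∀ c ∈ H.levelSet (m+1), H.parent c ∈ H.levelSet m := by
        intro c hc
        have hcr := hroot_ne c hc
        simp only [levelSet, Finset.mem_filter, Finset.mem_univ, true_and] at hc ⊢
        have := H.parent_level c hcr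
        omega
      have hfib : ∀ p ∈ H.levelSet m,
          (H.levelSet (m+1)).filter (fun c => H.parent c = p) = H.children p := by
        intro p hp
        simp only [levelSet, Finset.mem_filter, Finset.mem_univ, true_and] at hp
        ext c
        simp only [levelSet, children, Finset.mem_filter, Finset.mem_univ, true_and]
        constructor
        · rintro ⟨hlev, hpar⟩
          refine ⟨?_, hpar⟩
          intro hcr; rw [hcr, H.level_root] at hlev; omega
        · rintro ⟨hcr, hpar⟩
          refine ⟨?_, hpar⟩
          have := H.parent_level c hcr
          rw [hpar] at this; omega
      have hdecomp : ∀ f : H.Node → ℝ,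
          ∑ c ∈ H.levelSet (m+1), f c = ∑ p ∈ H.levelSet m, ∑ c ∈ H.children p, f c := by
        intro f
        rw [← Finset.sum_fiberwise_of_maps_to hmaps f]
        exact Finset.sum_congr rfl (fun p hp => by rw [hfib p hp])
      have hpar_lt : ∀ p ∈ H.levelSet m, H.level p < H.d := by
        intro p hp
        simp only [levelSet, Finset.mem_filter, Finset.mem_univ, true_and] at hp
        omega
      have hstep : ∑ h ∈ H.levelSet (m+1), w h * (α h - a h) =
          (∑ h ∈ H.levelSet m, w h * (α h - a h)) +
            ∑ h ∈ H.levelSet (m+1), (w h - w (H.parent h)) * L h := by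
        rw [hdecomp, hdecomp]
        rw [← Finset.sum_add_distrib]
        apply Finset.sum_congr rfl
        intro p hp
        rw [H.parent_step a L α hcons htd D w hw (hpar_lt p hp)]
        congr 1
        apply Finset.sum_congr rfl
        intro c hc
        rw [mem_children'] at hc
        rw [hc.2]
      -- split the RHS filter
      have hsplit : Finset.univ.filter (fun h => h ≠ H.root ∧ H.level h ≤ m + 1) =
          Finset.univ.filter (fun h => h ≠ H.root ∧ H.level h ≤ m) ∪ H.levelSet (m+1) := by
        ext h
        simp only [Finset.mem_filter, Finset.mem_univ, true_and, Finset.mem_union,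
          levelSet]
        constructor
        · rintro ⟨hne, hle'⟩
          rcases Nat.lt_or_ge (H.level h) (m+1) with h' | h'
          · exact Or.inl ⟨hne, by omega⟩
          · exact Or.inr (by omega)
        · rintro (⟨hne, hle'⟩ | hlev)
          · exact ⟨hne, by omega⟩
          · refine ⟨?_, by omega⟩
            intro hcr; rw [hcr, H.level_root] at hlev; omega
      have hdisj : Disjoint (Finset.univ.filter (fun h => h ≠ H.root ∧ H.level h ≤ m))
          (H.levelSet (m+1)) := by
        rw [Finset.disjoint_left]
        intro h hh hh'
        simp only [Finset.mem_filter, Finset.mem_univ, true_and, levelSet] at hh hh'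
        omega
      rw [hstep, key, hsplit, Finset.sum_union hdisj]
      ring

end Hierarchy


/-- District error identity: `E_D = w_root·L_root + Σ_{h ≠ root} (w_h − w_{parent h})·L_h`. -/
theorem toydown_district_error (H : Hierarchy) (a L α : H.Node → ℝ)
    (hcons : H.Consistent a) (htd : H.IsToyDown a L α)
    (D : Finset H.Node) (hD : D ⊆ H.leaves)
    (w : H.Node → ℝ) (hw : H.IsWeights D w) :
    ∑ h ∈ D, (α h - a h) =
      w H.root * L H.root +
        ∑ h ∈ Finset.univ.filter (fun h => h ≠ H.root),
          (w h - w (H.parent h)) * L h := by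
  obtain ⟨hwleaf, hwint⟩ := hw
  have hlev : ∀ h ∈ D, H.level h = H.d := by
    intro h hh
    have := hD hh
    simp only [Hierarchy.leaves, Hierarchy.levelSet, Finset.mem_filter] at this
    exact this.2
  have e1 : ∑ h ∈ D, (α h - a h) = ∑ h ∈ D, w h * (α h - a h) :=
    Finset.sum_congr rfl (fun h hh => by rw [hwleaf h (hlev h hh), if_pos hh, one_mul])
  have e2 : ∑ h ∈ D, w h * (α h - a h) = ∑ h ∈ H.leaves, w h * (α h - a h) :=
    Finset.sum_subset hD (fun h hh hnd => by
      rw [hwleaf h (by simpa [Hierarchy.leaves, Hierarchy.levelSet] using hh),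
        if_neg hnd, zero_mul])
  have h1 : ∑ h ∈ D, (α h - a h) = ∑ h ∈ H.levelSet H.d, w h * (α h - a h) :=
    e1.trans e2
  have h2 := H.level_sum a L α hcons htd D w ⟨hwleaf, hwint⟩ H.d H.d_pos le_rfl
  have h3 : Finset.univ.filter (fun h => h ≠ H.root ∧ H.level h ≤ H.d) =
      Finset.univ.filter (fun h => h ≠ H.root) := by
    apply Finset.filter_congr
    intro h _
    simp [H.level_le h]
  rw [h1, h2, h3]
end

section
/- Suppose H is homogeneous with branching numbers n_1, …, n_{d−1}, and suppose the noise values {L_h} are independent real-valued random variables with E[L_h] = 0 and Var(L_h) = 8/ε_{ℓ(h)}², where ε_1, …, ε_d > 0. Then for the singleton district D = {h} consisting of a single leaf h ∈ H_d, the error variance satisfies Var(E_h) = 8 / (ε_1² (n_1 n_2 ⋯ n_{d−1})²) + Σ_{ℓ=2}^{d} 8 n_{ℓ−1} (n_{ℓ−1} − 1) / (ε_ℓ² (n_{ℓ−1} n_ℓ ⋯ n_{d−1})²). -/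
open Finset MeasureTheory ProbabilityTheory

lemma mem_children_iff (H : Hierarchy) {p c : H.Node} :
    c ∈ H.children p ↔ c ≠ H.root ∧ H.parent c = p := by
  simp [Hierarchy.children]

lemma child_level (H : Hierarchy) {p c : H.Node} (hc : c ∈ H.children p) :
    H.level c = H.level p + 1 := by
  rw [mem_children_iff] at hc
  have := H.parent_level c hc.1
  rw [hc.2] at this
  omega

/-- The explicit projection formula for the ToyDown minimizer. -/
lemma toydown_child (H : Hierarchy) (a L α : H.Node → ℝ) (hα : H.IsToyDown a L α)
    (p : H.Node) (hp : H.level p < H.d) {c : H.Node} (hc : c ∈ H.children p) :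
    α c = (a c + L c) + (α p - ∑ c' ∈ H.children p, (a c' + L c')) / ((H.children p).card : ℝ) := by
  classical
  set s := H.children p with hs
  have hcard : (0:ℝ) < (s.card : ℝ) := by
    have : 0 < s.card := Finset.card_pos.2 ⟨c, hc⟩
    exact_mod_cast this
  set t : ℝ := (α p - ∑ c' ∈ s, (a c' + L c')) / (s.card : ℝ) with ht
  set x : H.Node → ℝ := fun i => if i ∈ s then (a i + L i) + t else α i with hx
  obtain ⟨hsum, hmin⟩ := hα.2 p hp
  have hxs : ∀ i ∈ s, x i = (a i + L i) + t := fun i hi => by simp [hx, hi]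
  have hNt : (s.card : ℝ) * t = α p - ∑ c' ∈ s, (a c' + L c') := by
    rw [ht, mul_div_cancel₀ _ (ne_of_gt hcard)]
  have hxsum : ∑ i ∈ s, x i = α p := by
    rw [Finset.sum_congr rfl hxs, Finset.sum_add_distrib, Finset.sum_const, nsmul_eq_mul, hNt]
    ring
  have hkey : ∀ i ∈ s, α i = x i := by
    by_contra hcon
    push_neg at hcon
    obtain ⟨i, hi, hne⟩ := hcon
    have hlt := hmin x hxsum ⟨i, hi, fun h => hne h.symm⟩
    have hexp : ∑ c' ∈ s, (α c' - (a c' + L c'))^2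
        = ∑ c' ∈ s, (α c' - x c')^2 + (s.card : ℝ) * t^2 := by
      have h0 : ∑ c' ∈ s, (α c' - x c') = 0 := by
        rw [Finset.sum_sub_distrib, hsum, hxsum, sub_self]
      have e : ∀ c' ∈ s, (α c' - (a c' + L c'))^2
          = (α c' - x c')^2 + 2*t*(α c' - x c') + t^2 := by
        intro c' hc'; rw [hxs c' hc']; ring
      rw [Finset.sum_congr rfl e]
      rw [Finset.sum_add_distrib, Finset.sum_add_distrib, ← Finset.mul_sum, h0,
        Finset.sum_const, nsmul_eq_mul]
      ring
    have hxval : ∑ c' ∈ s, (x c' - (a c' + L c'))^2 = (s.card : ℝ) * t^2 := by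
      have e : ∀ c' ∈ s, (x c' - (a c' + L c'))^2 = t^2 := by
        intro c' hc'; rw [hxs c' hc']; ring
      rw [Finset.sum_congr rfl e, Finset.sum_const, nsmul_eq_mul]
    rw [hxval, hexp] at hlt
    have : (0:ℝ) ≤ ∑ c' ∈ s, (α c' - x c')^2 :=
      Finset.sum_nonneg fun _ _ => sq_nonneg _
    linarith
  rw [hkey c hc, hxs c hc]
def ancAux (H : Hierarchy) (b : H.Node) (ℓ : ℕ) : H.Node := H.parent^[H.d - ℓ] b

noncomputable def gamAux (H : Hierarchy) (n : ℕ → ℕ) (b : H.Node) (h : H.Node) : ℝ :=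
  if h = H.root then 1
  else if H.parent h = ancAux H b (H.level h - 1) then
    (if h = ancAux H b (H.level h) then 1 - 1/(n (H.level h - 1) : ℝ)
     else -(1/(n (H.level h - 1) : ℝ)))
  else 0

noncomputable def coAux (H : Hierarchy) (n : ℕ → ℕ) (b : H.Node) (k : ℕ) (h : H.Node) : ℝ :=
  if H.level h ≤ k then
    gamAux H n b h * (∏ j ∈ Finset.Icc (H.level h) (k-1), (n j : ℝ))⁻¹
  else 0

lemma iter_level (H : Hierarchy) (b : H.Node) (hb : H.level b = H.d) :
    ∀ k, k ≤ H.d - 1 → H.level (H.parent^[k] b) = H.d - k := by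
  intro k
  induction k with
  | zero => intro _; simpa using hb
  | succ k ih =>
    intro hk
    have hk' : k ≤ H.d - 1 := by omega
    have hlev := ih hk'
    have hne : H.parent^[k] b ≠ H.root := by
      intro h
      rw [h, H.level_root] at hlev
      omega
    have := H.parent_level _ hne
    rw [Function.iterate_succ_apply']
    omega

lemma ancAux_level (H : Hierarchy) (b : H.Node) (hb : H.level b = H.d)
    {ℓ : ℕ} (h1 : 1 ≤ ℓ) (h2 : ℓ ≤ H.d) : H.level (ancAux H b ℓ) = ℓ := by
  have := iter_level H b hb (H.d - ℓ) (by omega)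
  rw [ancAux, this]
  omega

lemma ancAux_d (H : Hierarchy) (b : H.Node) : ancAux H b H.d = b := by
  simp [ancAux]

lemma ancAux_one (H : Hierarchy) (b : H.Node) (hb : H.level b = H.d) :
    ancAux H b 1 = H.root :=
  H.root_unique _ (ancAux_level H b hb le_rfl H.d_pos)

lemma ancAux_ne_root (H : Hierarchy) (b : H.Node) (hb : H.level b = H.d)
    {ℓ : ℕ} (h1 : 2 ≤ ℓ) (h2 : ℓ ≤ H.d) : ancAux H b ℓ ≠ H.root := by
  intro h
  have := ancAux_level H b hb (by omega : 1 ≤ ℓ) h2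
  rw [h, H.level_root] at this
  omega

lemma ancAux_parent (H : Hierarchy) (b : H.Node) (hb : H.level b = H.d)
    {ℓ : ℕ} (h1 : 2 ≤ ℓ) (h2 : ℓ ≤ H.d) :
    H.parent (ancAux H b ℓ) = ancAux H b (ℓ - 1) := by
  have : H.d - (ℓ - 1) = (H.d - ℓ) + 1 := by omega
  rw [ancAux, ancAux, this, Function.iterate_succ_apply']

lemma ancAux_mem_children (H : Hierarchy) (b : H.Node) (hb : H.level b = H.d)
    {ℓ : ℕ} (h1 : 2 ≤ ℓ) (h2 : ℓ ≤ H.d) :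
    ancAux H b ℓ ∈ H.children (ancAux H b (ℓ - 1)) := by
  rw [mem_children_iff]
  exact ⟨ancAux_ne_root H b hb h1 h2, ancAux_parent H b hb h1 h2⟩

lemma prod_Icc_bot {m : ℕ} (a : ℕ) (f : ℕ → ℝ) (h : a ≤ m) :
    ∏ j ∈ Finset.Icc a m, f j = f a * ∏ j ∈ Finset.Icc (a+1) m, f j := by
  have : Finset.Icc a m = insert a (Finset.Icc (a+1) m) := by
    ext x; simp only [Finset.mem_Icc, Finset.mem_insert]; omega
  rw [this, Finset.prod_insert (by simp)]
lemma toydown_repr (H : Hierarchy) (n : ℕ → ℕ)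
    (hhom : ∀ h, H.level h < H.d → (H.children h).card = n (H.level h))
    (a : H.Node → ℝ) (hcons : H.Consistent a)
    (L α : H.Node → ℝ) (hα : H.IsToyDown a L α)
    (b : H.Node) (hb : H.level b = H.d) :
    ∀ k, 1 ≤ k → k ≤ H.d →
      α (ancAux H b k) - a (ancAux H b k) = ∑ h, coAux H n b k h * L h := by
  intro k hk1
  induction k, hk1 using Nat.le_induction with
  | base =>
    intro _
    rw [ancAux_one H b hb]
    have hsum : ∑ h : H.Node, coAux H n b 1 h * L h = L H.root := by
      rw [Finset.sum_eq_single H.root]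
      · rw [coAux, if_pos (by rw [H.level_root]), gamAux, if_pos rfl, H.level_root]
        rw [Finset.Icc_eq_empty (by omega : ¬ (1:ℕ) ≤ 1 - 1), Finset.prod_empty, inv_one]
        ring
      · intro h _ hne
        have : ¬ H.level h ≤ 1 := by
          intro hle
          exact hne (H.root_unique h (by have := H.level_pos h; omega))
        rw [coAux, if_neg this, zero_mul]
      · intro h; exact absurd (Finset.mem_univ _) h
    rw [hsum, hα.1]
    ring
  | succ k hk ih =>
    intro hkd
    have hkd' : k ≤ H.d := by omega
    set p := ancAux H b k with hp
    set c := ancAux H b (k+1) with hc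
    have hlevp : H.level p = k := ancAux_level H b hb hk hkd'
    have hpd : H.level p < H.d := by omega
    have hcc : c ∈ H.children p := by
      have := ancAux_mem_children H b hb (by omega : 2 ≤ k+1) hkd
      simpa using this
    have hlevc : H.level c = k + 1 := ancAux_level H b hb (by omega) hkd
    have hcardn : (H.children p).card = n k := by rw [hhom p hpd, hlevp]
    have hN1 : 1 ≤ n k := by
      rw [← hcardn]; exact Finset.card_pos.2 ⟨c, hcc⟩
    have hNpos : (0:ℝ) < (n k : ℝ) := by
      have : (1:ℝ) ≤ (n k : ℝ) := by exact_mod_cast hN1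
      linarith
    have hrec : α c - a c = L c + ((α p - a p) - ∑ c' ∈ H.children p, L c') / (n k : ℝ) := by
      have h1 := toydown_child H a L α hα p hpd hcc
      have h2 : ∑ c' ∈ H.children p, (a c' + L c') = a p + ∑ c' ∈ H.children p, L c' := by
        rw [Finset.sum_add_distrib, ← hcons p hpd]
      rw [h1, h2, hcardn]
      ring
    have hih : α p - a p = ∑ h, coAux H n b k h * L h := ih hkd'
    have hD : ∀ h : H.Node, coAux H n b (k+1) h * L h
        = coAux H n b k h * L h / (n k : ℝ)
          + (if h ∈ H.children p then
              (if h = c then 1 - 1/(n k : ℝ) else -(1/(n k : ℝ))) * L h else 0) := by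
      intro h
      rcases lt_trichotomy (H.level h) (k+1) with hlt | heq | hgt
      · have hle : H.level h ≤ k := by omega
        have hnotmem : h ∉ H.children p := by
          intro hm
          have := child_level H hm
          rw [hlevp] at this
          omega
        rw [if_neg hnotmem, add_zero]
        rw [coAux, coAux, if_pos hle, if_pos (by omega : H.level h ≤ k+1)]
        have hprod : ∏ j ∈ Finset.Icc (H.level h) ((k+1)-1), (n j : ℝ)
            = (∏ j ∈ Finset.Icc (H.level h) (k-1), (n j : ℝ)) * (n k : ℝ) := by
          have hk2 : k = (k-1) + 1 := by omega
          rw [show (k+1)-1 = k from rfl]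
          rw [hk2, Finset.prod_Icc_succ_top (by omega), ← hk2]
        rw [hprod, mul_inv]
        field_simp
      · have hnle : ¬ H.level h ≤ k := by omega
        have hroot : h ≠ H.root := by
          intro h0; rw [h0, H.level_root] at heq; omega
        rw [coAux, coAux, if_neg hnle, if_pos (by omega : H.level h ≤ k+1)]
        rw [zero_mul, zero_div, zero_add]
        rw [Finset.Icc_eq_empty (by omega : ¬ H.level h ≤ (k+1)-1), Finset.prod_empty,
          inv_one, mul_one]
        rw [gamAux, if_neg hroot]
        have hl1 : H.level h - 1 = k := by omega
        rw [hl1, heq, ← hp, ← hc]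
        by_cases hpar : H.parent h = p
        · rw [if_pos hpar]
          have hmem : h ∈ H.children p := (mem_children_iff H).2 ⟨hroot, hpar⟩
          rw [if_pos hmem]
        · rw [if_neg hpar]
          have hmem : h ∉ H.children p := by
            rw [mem_children_iff]; tauto
          rw [if_neg hmem, zero_mul]
      · have hn1 : ¬ H.level h ≤ k+1 := by omega
        have hn2 : ¬ H.level h ≤ k := by omega
        have hnotmem : h ∉ H.children p := by
          intro hm; have := child_level H hm; rw [hlevp] at this; omega
        rw [coAux, coAux, if_neg hn1, if_neg hn2, if_neg hnotmem]
        simp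
    have hsum2 : ∑ h : H.Node, (if h ∈ H.children p then
          (if h = c then 1 - 1/(n k : ℝ) else -(1/(n k : ℝ))) * L h else 0)
        = L c - (∑ c' ∈ H.children p, L c') / (n k : ℝ) := by
      rw [Finset.sum_ite_mem, Finset.univ_inter]
      rw [← Finset.sum_erase_add _ _ hcc]
      have he : ∀ h ∈ (H.children p).erase c,
          (if h = c then 1 - 1/(n k : ℝ) else -(1/(n k : ℝ))) * L h
            = -(1/(n k : ℝ)) * L h := by
        intro h hh
        rw [if_neg (Finset.ne_of_mem_erase hh)]
      rw [Finset.sum_congr rfl he, if_pos rfl]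
      have hsplit : ∑ c' ∈ H.children p, L c' = (∑ h ∈ (H.children p).erase c, L h) + L c :=
        (Finset.sum_erase_add _ _ hcc).symm
      rw [hsplit, ← Finset.mul_sum]
      ring
    have hco : ∑ h : H.Node, coAux H n b (k+1) h * L h
        = ∑ h : H.Node, (coAux H n b k h * L h / (n k : ℝ)
          + (if h ∈ H.children p then
              (if h = c then 1 - 1/(n k : ℝ) else -(1/(n k : ℝ))) * L h else 0)) :=
      Finset.sum_congr rfl (fun h _ => hD h)
    rw [hrec, hco, Finset.sum_add_distrib, hsum2, ← Finset.sum_div, ← hih]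
    ring
/-- Error variance of a single leaf (block) in a homogeneous hierarchy with branching
numbers `n_1, …, n_{d−1}`. -/
theorem toydown_block_error_variance_homogeneous (H : Hierarchy)
    (n : ℕ → ℕ)
    (hhom : ∀ h, H.level h < H.d → (H.children h).card = n (H.level h))
    {Ω : Type} [MeasurableSpace Ω] (μ : MeasureTheory.Measure Ω)
    [MeasureTheory.IsProbabilityMeasure μ]
    (ε : ℕ → ℝ) (hε : ∀ ℓ, 1 ≤ ℓ → ℓ ≤ H.d → 0 < ε ℓ)
    (a : H.Node → ℝ) (hcons : H.Consistent a)
    (L : H.Node → Ω → ℝ)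
    (hmeas : ∀ h, Measurable (L h))
    (hL2 : ∀ h, MeasureTheory.MemLp (L h) 2 μ)
    (hindep : iIndepFun L μ)
    (hmean : ∀ h, ∫ ω, L h ω ∂μ = 0)
    (hvar : ∀ h, variance (L h) μ = 8 / (ε (H.level h)) ^ 2)
    (α : H.Node → Ω → ℝ)
    (hα : ∀ ω, H.IsToyDown a (fun h => L h ω) (fun h => α h ω))
    (b : H.Node) (hb : H.level b = H.d) :
    variance (fun ω => α b ω - a b) μ =
      8 / ((ε 1) ^ 2 * (∏ j ∈ Finset.Icc 1 (H.d - 1), (n j : ℝ)) ^ 2) +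
        ∑ ℓ ∈ Finset.Icc 2 H.d,
          8 * (n (ℓ - 1) : ℝ) * ((n (ℓ - 1) : ℝ) - 1) /
            ((ε ℓ) ^ 2 * (∏ j ∈ Finset.Icc (ℓ - 1) (H.d - 1), (n j : ℝ)) ^ 2) := by
  classical
  have hd := H.d_pos
  -- all branching numbers that occur are at least 1
  have hn1 : ∀ j, 1 ≤ j → j ≤ H.d - 1 → 1 ≤ n j := by
    intro j hj1 hj2
    have hlev : H.level (ancAux H b j) = j := ancAux_level H b hb hj1 (by omega)
    have hjd : H.level (ancAux H b j) < H.d := by omega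
    obtain ⟨c0, hc0⟩ := H.child_exists _ hjd
    have hc0m : c0 ∈ H.children (ancAux H b j) := (mem_children_iff H).2 hc0
    have hpos := Finset.card_pos.2 ⟨c0, hc0m⟩
    rw [hhom _ hjd, hlev] at hpos
    omega
  -- representation of the error as a linear combination of the noises
  have hE : ∀ ω, α b ω - a b = ∑ h, coAux H n b H.d h * L h ω := by
    intro ω
    have := toydown_repr H n hhom a hcons (fun h => L h ω) (fun h => α h ω) (hα ω) b hb
      H.d H.d_pos le_rfl
    rwa [ancAux_d] at this
  have hfun : (fun ω => α b ω - a b)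
      = ∑ h ∈ Finset.univ, (fun ω => coAux H n b H.d h * L h ω) := by
    funext ω
    rw [hE ω, Finset.sum_apply]
  rw [hfun]
  rw [IndepFun.variance_sum (fun h _ => ((hL2 h).const_mul _))
    (fun i _ j _ hij =>
      (hindep.indepFun hij).comp (measurable_id.const_mul _) (measurable_id.const_mul _))]
  have hvarsum : ∀ h ∈ (Finset.univ : Finset H.Node),
      variance (fun ω => coAux H n b H.d h * L h ω) μ
        = (coAux H n b H.d h)^2 * (8 / (ε (H.level h))^2) := by
    intro h _
    rw [variance_const_mul, hvar h]
  rw [Finset.sum_congr rfl hvarsum]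
  -- counting
  set f : H.Node → ℝ := fun h => (coAux H n b H.d h)^2 * (8 / (ε (H.level h))^2) with hf
  set T : Finset H.Node :=
    insert H.root ((Finset.Icc 2 H.d).biUnion fun ℓ => H.children (ancAux H b (ℓ-1))) with hT
  have hchildlev : ∀ ℓ, 2 ≤ ℓ → ℓ ≤ H.d →
      ∀ c' ∈ H.children (ancAux H b (ℓ-1)), H.level c' = ℓ := by
    intro ℓ hℓ1 hℓ2 c' hc'
    rw [child_level H hc', ancAux_level H b hb (by omega) (by omega)]
    omega
  have hTsum : ∑ h ∈ T, f h = ∑ h, f h := by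
    apply Finset.sum_subset (Finset.subset_univ T)
    intro h _ hhT
    have hroot : h ≠ H.root := by
      intro h0
      exact hhT (by rw [h0, hT]; exact Finset.mem_insert_self _ _)
    have hlev2 : 2 ≤ H.level h := by
      have h1 := H.level_pos h
      rcases Nat.lt_or_ge (H.level h) 2 with h2 | h2
      · exact absurd (H.root_unique h (by omega)) hroot
      · exact h2
    have hgam : gamAux H n b h = 0 := by
      rw [gamAux, if_neg hroot]
      by_cases hpar : H.parent h = ancAux H b (H.level h - 1)
      · exfalso
        apply hhT
        rw [hT]
        apply Finset.mem_insert_of_mem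
        apply Finset.mem_biUnion.2
        exact ⟨H.level h, Finset.mem_Icc.2 ⟨hlev2, H.level_le h⟩,
          (mem_children_iff H).2 ⟨hroot, hpar⟩⟩
      · rw [if_neg hpar]
    rw [hf]
    simp only
    rw [coAux, if_pos (H.level_le h), hgam]
    ring
  rw [← hTsum, hT]
  have hrootnot : H.root ∉ (Finset.Icc 2 H.d).biUnion fun ℓ => H.children (ancAux H b (ℓ-1)) := by
    intro hmem
    obtain ⟨ℓ, hℓ, hrc⟩ := Finset.mem_biUnion.1 hmem
    exact ((mem_children_iff H).1 hrc).1 rfl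
  rw [Finset.sum_insert hrootnot]
  rw [Finset.sum_biUnion (by
    intro ℓ1 h1 ℓ2 h2 hne
    simp only [Finset.coe_Icc, Set.mem_Icc] at h1 h2
    simp only [Function.onFun]
    rw [Finset.disjoint_left]
    intro c' hc1 hc2
    have e1 := hchildlev ℓ1 h1.1 h1.2 c' hc1
    have e2 := hchildlev ℓ2 h2.1 h2.2 c' hc2
    exact hne (by omega))]
  have hP : (0:ℝ) < ∏ j ∈ Finset.Icc 1 (H.d - 1), (n j : ℝ) := by
    apply Finset.prod_pos
    intro j hj
    rw [Finset.mem_Icc] at hj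
    have := hn1 j hj.1 hj.2
    have : (1:ℝ) ≤ (n j : ℝ) := by exact_mod_cast this
    linarith
  have hε1 : 0 < ε 1 := hε 1 le_rfl hd
  have hroot_term : f H.root = 8 / ((ε 1) ^ 2 * (∏ j ∈ Finset.Icc 1 (H.d - 1), (n j : ℝ)) ^ 2) := by
    rw [hf]
    simp only
    rw [coAux, if_pos (H.level_le H.root), gamAux, if_pos rfl, H.level_root]
    rw [one_mul]
    field_simp
  rw [hroot_term]
  congr 1
  apply Finset.sum_congr rfl
  intro ℓ hℓ
  rw [Finset.mem_Icc] at hℓ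
  obtain ⟨hℓ2, hℓd⟩ := hℓ
  have hm1 : 1 ≤ ℓ - 1 := by omega
  have hmd : ℓ - 1 ≤ H.d - 1 := by omega
  have hlevm : H.level (ancAux H b (ℓ-1)) = ℓ - 1 := ancAux_level H b hb hm1 (by omega)
  have hmlt : H.level (ancAux H b (ℓ-1)) < H.d := by omega
  have hcard : (H.children (ancAux H b (ℓ-1))).card = n (ℓ-1) := by
    rw [hhom _ hmlt, hlevm]
  have hNnat : 1 ≤ n (ℓ-1) := hn1 _ hm1 hmd
  have hN : (1:ℝ) ≤ (n (ℓ-1) : ℝ) := by exact_mod_cast hNnat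
  have hQ : (0:ℝ) < ∏ j ∈ Finset.Icc ℓ (H.d - 1), (n j : ℝ) := by
    apply Finset.prod_pos
    intro j hj
    rw [Finset.mem_Icc] at hj
    have := hn1 j (by omega) hj.2
    have : (1:ℝ) ≤ (n j : ℝ) := by exact_mod_cast this
    linarith
  have hPQ : ∏ j ∈ Finset.Icc (ℓ-1) (H.d - 1), (n j : ℝ)
      = (n (ℓ-1) : ℝ) * ∏ j ∈ Finset.Icc ℓ (H.d - 1), (n j : ℝ) := by
    have := prod_Icc_bot (ℓ-1) (fun j => (n j : ℝ)) hmd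
    rwa [show (ℓ-1)+1 = ℓ by omega] at this
  have hmemanc : ancAux H b ℓ ∈ H.children (ancAux H b (ℓ-1)) :=
    ancAux_mem_children H b hb hℓ2 hℓd
  have hεℓ : 0 < ε ℓ := hε ℓ (by omega) hℓd
  have hfc : ∀ c' ∈ H.children (ancAux H b (ℓ-1)),
      f c' = (if c' = ancAux H b ℓ then 1 - 1/(n (ℓ-1) : ℝ) else -(1/(n (ℓ-1) : ℝ)))^2
        * ((∏ j ∈ Finset.Icc ℓ (H.d - 1), (n j : ℝ))⁻¹)^2 * (8 / (ε ℓ)^2) := by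
    intro c' hc'
    have hlevc : H.level c' = ℓ := hchildlev ℓ hℓ2 hℓd c' hc'
    obtain ⟨hcr, hcp⟩ := (mem_children_iff H).1 hc'
    rw [hf]
    simp only
    rw [coAux, if_pos (H.level_le c'), gamAux, if_neg hcr, hlevc]
    rw [if_pos (by rw [hcp])]
    ring
  rw [Finset.sum_congr rfl hfc]
  rw [← Finset.sum_erase_add _ _ hmemanc, if_pos rfl]
  have he : ∀ c' ∈ (H.children (ancAux H b (ℓ-1))).erase (ancAux H b ℓ),
      (if c' = ancAux H b ℓ then 1 - 1/(n (ℓ-1) : ℝ) else -(1/(n (ℓ-1) : ℝ)))^2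
        * ((∏ j ∈ Finset.Icc ℓ (H.d - 1), (n j : ℝ))⁻¹)^2 * (8 / (ε ℓ)^2)
      = (1/(n (ℓ-1) : ℝ))^2
        * ((∏ j ∈ Finset.Icc ℓ (H.d - 1), (n j : ℝ))⁻¹)^2 * (8 / (ε ℓ)^2) := by
    intro c' hc'
    rw [if_neg (Finset.ne_of_mem_erase hc')]
    ring
  rw [Finset.sum_congr rfl he, Finset.sum_const, Finset.card_erase_of_mem hmemanc, hcard]
  rw [hPQ, nsmul_eq_mul]
  have hcast : ((n (ℓ-1) - 1 : ℕ) : ℝ) = (n (ℓ-1) : ℝ) - 1 := by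
    have := hNnat
    push_cast [this]
    ring
  rw [hcast]
  have hN0 : (n (ℓ-1) : ℝ) ≠ 0 := by linarith
  have hQ0 : (∏ j ∈ Finset.Icc ℓ (H.d - 1), (n j : ℝ)) ≠ 0 := ne_of_gt hQ
  have hε0 : ε ℓ ≠ 0 := ne_of_gt hεℓ
  field_simp
  ring
end

section
/- Let d ≥ 1, let a_1, …, a_d > 0 and ε > 0. Then the minimum value of f(x_1, …, x_d) = Σ_{ℓ=1}^{d} a_ℓ / x_ℓ² over the set {x ∈ ℝ^d : x_ℓ > 0 for all ℓ and Σ_ℓ x_ℓ = ε} equals (Σ_{i=1}^{d} a_i^{1/3})³ / ε². -/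
/-- Tangent line inequality for `a / x ^ 2` at point `c`. -/
lemma budget_key (a x c : ℝ) (ha : 0 < a) (hx : 0 < x) (hc : 0 < c) :
    3 * a / c ^ 2 - 2 * a * x / c ^ 3 ≤ a / x ^ 2 := by
  rw [div_sub_div _ _ (by positivity) (by positivity),
    div_le_div_iff₀ (by positivity) (by positivity)]
  nlinarith [mul_nonneg (mul_nonneg (mul_nonneg ha.le (sq_nonneg (c - x)))
    (by positivity : (0:ℝ) ≤ c + 2 * x)) (sq_nonneg c),
    sq_nonneg (c - x), mul_pos hx hc]

/-- The minimum value of `f(x) = Σ_ℓ a_ℓ / x_ℓ²` over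
`{x : ∀ ℓ, x_ℓ > 0, Σ_ℓ x_ℓ = ε}` equals `(Σᵢ aᵢ^{1/3})³ / ε²`. -/
theorem budget_allocation_min_value
    (d : ℕ) (hd : 1 ≤ d) (a : Fin d → ℝ) (ha : ∀ i, 0 < a i)
    (ε : ℝ) (hε : 0 < ε) :
    IsLeast
      {v : ℝ | ∃ y : Fin d → ℝ, (∀ i, 0 < y i) ∧ (∑ i, y i = ε) ∧
        v = ∑ i, a i / (y i) ^ 2}
      ((∑ i, (a i) ^ ((1 : ℝ) / 3)) ^ 3 / ε ^ 2) := by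
  have hne : Nonempty (Fin d) := ⟨⟨0, hd⟩⟩
  set b : Fin d → ℝ := fun i => (a i) ^ ((1 : ℝ) / 3) with hbdef
  have hb : ∀ i, 0 < b i := fun i => Real.rpow_pos_of_pos (ha i) _
  have hb3 : ∀ i, b i ^ 3 = a i := by
    intro i
    rw [hbdef]
    rw [← Real.rpow_natCast ((a i) ^ ((1:ℝ)/3)) 3, ← Real.rpow_mul (ha i).le]
    norm_num
  set S : ℝ := ∑ i, b i with hSdef
  have hS : 0 < S := Finset.sum_pos (fun i _ => hb i) Finset.univ_nonempty
  constructor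
  · -- membership
    refine ⟨fun i => ε * b i / S, fun i => div_pos (mul_pos hε (hb i)) hS, ?_, ?_⟩
    · rw [← Finset.sum_div, ← Finset.mul_sum, ← hSdef]
      field_simp
    · have : ∀ i, a i / (ε * b i / S) ^ 2 = b i * (S ^ 2 / ε ^ 2) := by
        intro i
        rw [← hb3 i]
        have := hb i
        field_simp
      rw [Finset.sum_congr rfl (fun i _ => this i), ← Finset.sum_mul, ← hSdef]
      field_simp
  · -- lower bound
    rintro v ⟨y, hy, hsum, rfl⟩
    have key : ∀ i ∈ Finset.univ,
        3 * a i / (ε * b i / S) ^ 2 - 2 * a i * y i / (ε * b i / S) ^ 3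
          ≤ a i / (y i) ^ 2 := by
      intro i _
      exact budget_key (a i) (y i) (ε * b i / S) (ha i) (hy i) (div_pos (mul_pos hε (hb i)) hS)
    have h1 : ∀ i, 3 * a i / (ε * b i / S) ^ 2 - 2 * a i * y i / (ε * b i / S) ^ 3
        = 3 * (S ^ 2 / ε ^ 2) * b i - 2 * (S ^ 3 / ε ^ 3) * y i := by
      intro i
      rw [← hb3 i]
      have := hb i
      field_simp
    calc S ^ 3 / ε ^ 2
        = ∑ i, (3 * (S ^ 2 / ε ^ 2) * b i - 2 * (S ^ 3 / ε ^ 3) * y i) := by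
          rw [Finset.sum_sub_distrib, ← Finset.mul_sum, ← Finset.mul_sum, ← hSdef,
            hsum]
          field_simp
          ring
      _ = ∑ i, (3 * a i / (ε * b i / S) ^ 2 - 2 * a i * y i / (ε * b i / S) ^ 3) := by
          exact Finset.sum_congr rfl (fun i _ => (h1 i).symm)
      _ ≤ ∑ i, a i / (y i) ^ 2 := Finset.sum_le_sum key
end

section
/- Suppose the noise values {L_h}_{h∈H} are independent real-valued random variables with E[L_h] = 0 and Var(L_h) = 8 d² / ε² for every h (the equal-split allocation ε_ℓ = ε/d at every level ℓ, with ε > 0). Then for every district D ⊆ H_d with associated weights {w_h}, the district error satisfies Var(E_D) = (8 d² / ε²) · (w_root² + Frag(D)). -/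
open Finset MeasureTheory ProbabilityTheory

namespace ToyDownAux

variable (H : Hierarchy)

lemma children_nonempty (x : H.Node) (hx : H.level x < H.d) : (H.children x).Nonempty := by
  obtain ⟨c, hc1, hc2⟩ := H.child_exists x hx
  exact ⟨c, by simp [Hierarchy.children, hc1, hc2]⟩

lemma card_children_pos (x : H.Node) (hx : H.level x < H.d) :
    (0 : ℝ) < ((H.children x).card : ℝ) := by
  exact_mod_cast Finset.card_pos.mpr (children_nonempty H x hx)

/-- The ToyDown minimizer distributes the residual equally among children. -/
lemma toydown_child (a L α : H.Node → ℝ) (hα : H.IsToyDown a L α)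
    (x : H.Node) (hx : H.level x < H.d) (c : H.Node) (hc : c ∈ H.children x) :
    α c = (a c + L c) +
      (α x - ∑ c' ∈ H.children x, (a c' + L c')) / ((H.children x).card : ℝ) := by
  set n : ℝ := ((H.children x).card : ℝ) with hn
  have hnpos : 0 < n := card_children_pos H x hx
  set t : ℝ := (α x - ∑ c' ∈ H.children x, (a c' + L c')) / n with ht
  have hnt : n * t = α x - ∑ c' ∈ H.children x, (a c' + L c') := by
    rw [ht]; field_simp
  obtain ⟨hsum, hmin⟩ := hα.2 x hx
  by_contra hne
  have hy : (∑ c' ∈ H.children x, ((a c' + L c') + t)) = α x := by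
    rw [Finset.sum_add_distrib, Finset.sum_const, nsmul_eq_mul, ← hn]
    linarith
  have hstrict := hmin (fun c' => (a c' + L c') + t) hy
    ⟨c, hc, fun h => hne h.symm⟩
  have hrhs : ∑ c' ∈ H.children x, (((a c' + L c') + t) - (a c' + L c'))^2 = n * t^2 := by
    have : ∀ c' ∈ H.children x, (((a c' + L c') + t) - (a c' + L c'))^2 = t^2 := by
      intro c' _; ring
    rw [Finset.sum_congr rfl this, Finset.sum_const, nsmul_eq_mul, ← hn]
  have hsum_u : ∑ c' ∈ H.children x, (α c' - (a c' + L c')) = n * t := by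
    rw [Finset.sum_sub_distrib, hsum]; linarith
  have hexp : ∑ c' ∈ H.children x, ((α c' - (a c' + L c'))^2
        - ((α c' - (a c' + L c')) - t)^2)
      = ∑ c' ∈ H.children x, (2 * t * (α c' - (a c' + L c')) - t^2) := by
    apply Finset.sum_congr rfl; intro c' _; ring
  have hexp2 : ∑ c' ∈ H.children x, (2 * t * (α c' - (a c' + L c')) - t^2)
      = 2 * t * (n * t) - n * t^2 := by
    rw [Finset.sum_sub_distrib, ← Finset.mul_sum, hsum_u, Finset.sum_const,
      nsmul_eq_mul, ← hn]
  have hnonneg : 0 ≤ ∑ c' ∈ H.children x, ((α c' - (a c' + L c')) - t)^2 :=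
    Finset.sum_nonneg fun _ _ => sq_nonneg _
  have hsplit : ∑ c' ∈ H.children x, (α c' - (a c' + L c'))^2
      = ∑ c' ∈ H.children x, ((α c' - (a c' + L c')) - t)^2 + n * t^2 := by
    have := hexp.trans hexp2
    rw [Finset.sum_sub_distrib] at this
    nlinarith [this]
  rw [hrhs] at hstrict
  nlinarith [hstrict, hsplit, hnonneg]

lemma step (a L α w : H.Node → ℝ) (hα : H.IsToyDown a L α)
    (hcons : H.Consistent a)
    (hw2 : ∀ h, H.level h < H.d →
      w h = (∑ c ∈ H.children h, w c) / ((H.children h).card : ℝ))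
    (x : H.Node) (hx : H.level x < H.d) :
    ∑ c ∈ H.children x, w c * (α c - a c) =
      (∑ c ∈ H.children x, (w c - w x) * L c) + w x * (α x - a x) := by
  set n : ℝ := ((H.children x).card : ℝ) with hn
  have hnpos : 0 < n := card_children_pos H x hx
  set t : ℝ := (α x - ∑ c' ∈ H.children x, (a c' + L c')) / n with ht
  have hnt : n * t = α x - ∑ c' ∈ H.children x, (a c' + L c') := by
    rw [ht]; field_simp
  have habL : ∑ c' ∈ H.children x, (a c' + L c')
      = a x + ∑ c' ∈ H.children x, L c' := by
    rw [Finset.sum_add_distrib, ← hcons x hx]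
  have hChild : ∀ c ∈ H.children x, α c - a c = L c + t := by
    intro c hc
    have := toydown_child H a L α hα x hx c hc
    rw [this]; ring
  have hwsum : ∑ c ∈ H.children x, w c = n * w x := by
    rw [hw2 x hx, ← hn]; field_simp
  have hLHS : ∑ c ∈ H.children x, w c * (α c - a c)
      = (∑ c ∈ H.children x, w c * L c) + (∑ c ∈ H.children x, w c) * t := by
    rw [Finset.sum_mul, ← Finset.sum_add_distrib]
    apply Finset.sum_congr rfl
    intro c hc; rw [hChild c hc]; ring
  have hRHS : ∑ c ∈ H.children x, (w c - w x) * L c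
      = (∑ c ∈ H.children x, w c * L c) - w x * (∑ c ∈ H.children x, L c) := by
    rw [Finset.mul_sum, ← Finset.sum_sub_distrib]
    apply Finset.sum_congr rfl; intro c _; ring
  have hkey : (n * w x) * t = w x * (α x - a x - ∑ c' ∈ H.children x, L c') := by
    rw [mul_comm n (w x), mul_assoc, hnt, habL]; ring
  rw [hLHS, hRHS, hwsum]
  linarith

lemma levelSet_succ (ℓ : ℕ) (h1 : 1 ≤ ℓ) :
    H.levelSet (ℓ + 1) = (H.levelSet ℓ).biUnion H.children := by
  ext c
  simp only [Hierarchy.levelSet, Hierarchy.children, Finset.mem_biUnion,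
    Finset.mem_filter, Finset.mem_univ, true_and]
  constructor
  · intro hc
    have hcr : c ≠ H.root := by
      intro hrfl
      rw [hrfl, H.level_root] at hc; omega
    have hp := H.parent_level c hcr
    exact ⟨H.parent c, by omega, hcr, rfl⟩
  · rintro ⟨h, hh, hcr, rfl⟩
    have := H.parent_level c hcr
    omega

lemma children_pairwiseDisjoint (s : Finset H.Node) :
    Set.PairwiseDisjoint ↑s H.children := by
  intro x _ y _ hxy
  simp only [Function.onFun]
  rw [Finset.disjoint_left]
  intro c hcx hcy
  apply hxy
  simp only [Hierarchy.children, Finset.mem_filter, Finset.mem_univ, true_and] at hcx hcy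
  rw [← hcx.2, ← hcy.2]

lemma sum_level (a L α w : H.Node → ℝ) (hα : H.IsToyDown a L α)
    (hcons : H.Consistent a)
    (hw2 : ∀ h, H.level h < H.d →
      w h = (∑ c ∈ H.children h, w c) / ((H.children h).card : ℝ)) :
    ∀ ℓ, 1 ≤ ℓ → ℓ ≤ H.d →
      ∑ h ∈ H.levelSet ℓ, w h * (α h - a h) =
        ∑ h ∈ Finset.univ.filter (fun h => H.level h ≤ ℓ),
          (if h = H.root then w H.root else w h - w (H.parent h)) * L h := by
  intro ℓ
  induction ℓ with
  | zero => omega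
  | succ m ih =>
    intro _ hle
    rcases Nat.eq_zero_or_pos m with hm | hm
    · -- base case ℓ = 1
      subst hm
      have hls : H.levelSet 1 = {H.root} := by
        ext h
        simp only [Hierarchy.levelSet, Finset.mem_filter, Finset.mem_univ, true_and,
          Finset.mem_singleton]
        exact ⟨H.root_unique h, fun hr => hr ▸ H.level_root⟩
      have hfs : Finset.univ.filter (fun h => H.level h ≤ 1) = {H.root} := by
        ext h
        simp only [Finset.mem_filter, Finset.mem_univ, true_and, Finset.mem_singleton]
        constructor
        · intro hh
          exact H.root_unique h (le_antisymm hh (H.level_pos h))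
        · intro hr; rw [hr, H.level_root]
      rw [hls, hfs, Finset.sum_singleton, Finset.sum_singleton, if_pos rfl, hα.1]
      ring
    · -- inductive step
      have hmd : m < H.d := by omega
      have ihm := ih hm (le_of_lt hmd)
      have hbi := levelSet_succ H m hm
      have hdisj := children_pairwiseDisjoint H (H.levelSet m)
      have hlevm : ∀ h ∈ H.levelSet m, H.level h < H.d := by
        intro h hh
        simp only [Hierarchy.levelSet, Finset.mem_filter] at hh
        omega
      have hLHS : ∑ h ∈ H.levelSet (m + 1), w h * (α h - a h)
          = ∑ h ∈ H.levelSet m, ∑ c ∈ H.children h, w c * (α c - a c) := by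
        rw [hbi, Finset.sum_biUnion hdisj]
      have hstep : ∀ h ∈ H.levelSet m,
          ∑ c ∈ H.children h, w c * (α c - a c)
            = (∑ c ∈ H.children h, (w c - w h) * L c) + w h * (α h - a h) := by
        intro h hh
        exact step H a L α w hα hcons hw2 h (hlevm h hh)
      have hfrag : ∀ h ∈ H.levelSet m, ∀ c ∈ H.children h,
          (w c - w h) * L c
            = (if c = H.root then w H.root else w c - w (H.parent c)) * L c := by
        intro h _ c hc
        simp only [Hierarchy.children, Finset.mem_filter, Finset.mem_univ, true_and] at hc
        rw [if_neg hc.1, hc.2]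
      have hnew : ∑ h ∈ H.levelSet m, ∑ c ∈ H.children h, (w c - w h) * L c
          = ∑ c ∈ H.levelSet (m + 1),
              (if c = H.root then w H.root else w c - w (H.parent c)) * L c := by
        rw [hbi, Finset.sum_biUnion hdisj]
        apply Finset.sum_congr rfl
        intro h hh
        exact Finset.sum_congr rfl (hfrag h hh)
      have hfsplit : Finset.univ.filter (fun h => H.level h ≤ m + 1)
          = Finset.univ.filter (fun h => H.level h ≤ m) ∪ H.levelSet (m + 1) := by
        ext h
        simp only [Hierarchy.levelSet, Finset.mem_union, Finset.mem_filter,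
          Finset.mem_univ, true_and]
        omega
      have hfdisj : Disjoint (Finset.univ.filter (fun h => H.level h ≤ m))
          (H.levelSet (m + 1)) := by
        rw [Finset.disjoint_left]
        intro h hh hh'
        simp only [Hierarchy.levelSet, Finset.mem_filter, Finset.mem_univ, true_and]
          at hh hh'
        omega
      rw [hLHS, Finset.sum_congr rfl hstep, Finset.sum_add_distrib, hnew, ihm,
        hfsplit, Finset.sum_union hfdisj]
      ring

end ToyDownAux

/-- Under the equal-split allocation (`Var(L_h) = 8d²/ε²` at every node), the district
error variance equals `(8d²/ε²)·(w_root² + Frag(D))`. -/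
theorem toydown_variance_frag (H : Hierarchy)
    {Ω : Type} [MeasurableSpace Ω] (μ : MeasureTheory.Measure Ω)
    [MeasureTheory.IsProbabilityMeasure μ]
    (ε : ℝ) (hε : 0 < ε)
    (a : H.Node → ℝ) (hcons : H.Consistent a)
    (L : H.Node → Ω → ℝ)
    (hmeas : ∀ h, Measurable (L h))
    (hL2 : ∀ h, MeasureTheory.MemLp (L h) 2 μ)
    (hindep : iIndepFun L μ)
    (hmean : ∀ h, ∫ ω, L h ω ∂μ = 0)
    (hvar : ∀ h, variance (L h) μ = 8 * (H.d : ℝ) ^ 2 / ε ^ 2)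
    (α : H.Node → Ω → ℝ)
    (hα : ∀ ω, H.IsToyDown a (fun h => L h ω) (fun h => α h ω))
    (D : Finset H.Node) (hD : D ⊆ H.leaves)
    (w : H.Node → ℝ) (hw : H.IsWeights D w) :
    variance (fun ω => ∑ h ∈ D, (α h ω - a h)) μ =
      (8 * (H.d : ℝ) ^ 2 / ε ^ 2) * ((w H.root) ^ 2 + H.frag w) := by
  classical
  set cf : H.Node → ℝ := fun h => if h = H.root then w H.root else w h - w (H.parent h)
    with hcf
  -- pointwise identity
  have key : (fun ω => ∑ h ∈ D, (α h ω - a h))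
      = ∑ h : H.Node, (fun ω => cf h * L h ω) := by
    funext ω
    have hS := ToyDownAux.sum_level H a (fun h => L h ω) (fun h => α h ω) w
      (hα ω) hcons hw.2 H.d H.d_pos le_rfl
    have hfilter : Finset.univ.filter (fun h => H.level h ≤ H.d) = Finset.univ := by
      apply Finset.filter_true_of_mem
      intro h _; exact H.level_le h
    have hleafD : ∑ h ∈ H.levelSet H.d, w h * (α h ω - a h)
        = ∑ h ∈ D, (α h ω - a h) := by
      have h1 : ∀ h ∈ H.levelSet H.d, w h * (α h ω - a h)
          = if h ∈ D then (α h ω - a h) else 0 := by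
        intro h hh
        simp only [Hierarchy.levelSet, Finset.mem_filter] at hh
        rw [hw.1 h hh.2]
        split_ifs <;> ring
      rw [Finset.sum_congr rfl h1, ← Finset.sum_filter]
      congr 1
      ext h
      simp only [Finset.mem_filter]
      exact ⟨fun hh => hh.2, fun hh => ⟨hD hh, hh⟩⟩
    rw [Finset.sum_apply]
    rw [← hleafD, hS, hfilter]
  rw [key]
  rw [ProbabilityTheory.IndepFun.variance_sum
    (fun h _ => (hL2 h).const_mul (cf h))
    (by
      intro i _ j _ hij
      exact (hindep.indepFun hij).comp
        (measurable_const_mul (cf i)) (measurable_const_mul (cf j)))]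
  have hvar' : ∀ h : H.Node, variance (fun ω => cf h * L h ω) μ
      = cf h ^ 2 * (8 * (H.d : ℝ) ^ 2 / ε ^ 2) := by
    intro h
    rw [variance_const_mul, hvar h]
  rw [Finset.sum_congr rfl (fun h _ => hvar' h)]
  have hsplit : ∑ h : H.Node, cf h ^ 2 * (8 * (H.d : ℝ) ^ 2 / ε ^ 2)
      = (8 * (H.d : ℝ) ^ 2 / ε ^ 2) * ∑ h : H.Node, cf h ^ 2 := by
    rw [Finset.mul_sum]
    apply Finset.sum_congr rfl; intro h _; ring
  rw [hsplit]
  congr 1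
  have hpart := Finset.sum_filter_add_sum_filter_not Finset.univ
    (fun h => h = H.root) (fun h => cf h ^ 2)
  have hroot : Finset.univ.filter (fun h => h = H.root) = {H.root} := by
    ext h; simp
  have h1 : ∑ h ∈ Finset.univ.filter (fun h => h = H.root), cf h ^ 2
      = w H.root ^ 2 := by
    rw [hroot, Finset.sum_singleton, hcf]
    simp
  have h2 : ∑ h ∈ Finset.univ.filter (fun h => ¬h = H.root), cf h ^ 2
      = H.frag w := by
    unfold Hierarchy.frag
    apply Finset.sum_congr rfl
    intro h hh
    simp only [Finset.mem_filter] at hh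
    rw [hcf]
    simp only [if_neg hh.2]
  rw [← hpart, h1, h2]
end

section
/- Let T be a finite nonempty set of types. For each type t ∈ T, let {a_{h,t}}_{h∈H} be hierarchically consistent raw counts and {L_{h,t}}_{h∈H} ⊆ ℝ noise values, and set â_{h,t} = a_{h,t} + L_{h,t}. Define the multi-attribute post-processed counts {α_{h,t}} top-down by: α_{root,t} = â_{root,t} for each t, and for each non-leaf h, the array (x_{i,t})_{1≤i≤n(h), t∈T} minimizing Σ_{i,t} (x_{i,t} − â_{h_i,t})² subject to Σ_{i=1}^{n(h)} x_{i,t} = α_{h,t} for every t ∈ T, which is unique. Then for each fixed t ∈ T, the counts {α_{h,t}}_{h∈H} coincide exactly with the output of single-attribute ToyDown post-processing applied to the raw counts {a_{h,t}}_{h∈H} and noise values {L_{h,t}}_{h∈H}; that is, multi-attribute ToyDown without a non-negativity constraint is equivalent to |T| independent instances of single-attribute ToyDown, one per type. -/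
open Finset MeasureTheory ProbabilityTheory

/-- Multi-attribute ToyDown post-processing (without non-negativity): at the root the
noised counts are kept, and below each non-leaf node the array of children counts is the
unique least-squares point consistent with the parent totals for every type. -/
def Hierarchy.IsMultiToyDown (H : Hierarchy) (T : Type) [Fintype T]
    (a L α : H.Node → T → ℝ) : Prop :=
  (∀ t, α H.root t = a H.root t + L H.root t) ∧
  ∀ h, H.level h < H.d →
    (∀ t, (∑ c ∈ H.children h, α c t) = α h t) ∧
    ∀ x : H.Node → T → ℝ, (∀ t, (∑ c ∈ H.children h, x c t) = α h t) →
      (∃ c ∈ H.children h, ∃ t, x c t ≠ α c t) →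
      ∑ c ∈ H.children h, ∑ t, (α c t - (a c t + L c t)) ^ 2 <
        ∑ c ∈ H.children h, ∑ t, (x c t - (a c t + L c t)) ^ 2

/-- Multi-attribute ToyDown without a non-negativity constraint decomposes into `|T|`
independent instances of single-attribute ToyDown: for each type `t`, the multi-attribute
output restricted to `t` satisfies the single-attribute ToyDown characterization, and it
is the unique such function. -/
theorem multi_toydown_eq_single (H : Hierarchy)
    (T : Type) [Fintype T] [Nonempty T]
    (a L α : H.Node → T → ℝ)
    (hcons : ∀ t, H.Consistent (fun h => a h t))
    (hmulti : H.IsMultiToyDown T a L α) :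
    ∀ t, H.IsToyDown (fun h => a h t) (fun h => L h t) (fun h => α h t) ∧
      ∀ αs : H.Node → ℝ,
        H.IsToyDown (fun h => a h t) (fun h => L h t) αs →
          αs = fun h => α h t := by
  classical
  intro t
  have hsingle : H.IsToyDown (fun h => a h t) (fun h => L h t) (fun h => α h t) := by
    refine ⟨hmulti.1 t, fun h hl => ⟨(hmulti.2 h hl).1 t, ?_⟩⟩
    rintro x hsum ⟨c0, hc0, hne0⟩
    set X : H.Node → T → ℝ := fun c s => if s = t then x c else α c s with hX
    have hkey := (hmulti.2 h hl).2 X ?_ ?_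
    · have e1 : ∀ c : H.Node, ∑ s, (α c s - (a c s + L c s))^2
          = (α c t - (a c t + L c t))^2
            + ∑ s ∈ Finset.univ.erase t, (α c s - (a c s + L c s))^2 := by
        intro c; rw [← Finset.add_sum_erase _ _ (Finset.mem_univ t)]
      have e2 : ∀ c : H.Node, ∑ s, (X c s - (a c s + L c s))^2
          = (x c - (a c t + L c t))^2
            + ∑ s ∈ Finset.univ.erase t, (α c s - (a c s + L c s))^2 := by
        intro c
        rw [← Finset.add_sum_erase _ _ (Finset.mem_univ t)]
        congr 1
        · simp [hX]
        · refine Finset.sum_congr rfl fun s hs => ?_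
          simp [hX, (Finset.mem_erase.mp hs).1]
      simp only [e1, e2, Finset.sum_add_distrib] at hkey
      linarith
    · intro s
      by_cases hs : s = t
      · subst hs; simpa [hX] using hsum
      · simpa [hX, hs] using (hmulti.2 h hl).1 s
    · exact ⟨c0, hc0, t, by simpa [hX] using hne0⟩
  refine ⟨hsingle, fun αs hαs => ?_⟩
  have key : ∀ n (h : H.Node), H.level h ≤ n → αs h = α h t := by
    intro n
    induction n with
    | zero => intro h hh; exact absurd (le_trans (H.level_pos h) hh) (by norm_num)
    | succ n ih =>
      intro h hh
      by_cases hr : h = H.root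
      · subst hr; rw [hαs.1]; exact (hsingle.1).symm
      · set p := H.parent h with hpdef
        have hp : H.level p + 1 = H.level h := H.parent_level h hr
        have hplt : H.level p < H.d := by have := H.level_le h; omega
        have hple : H.level p ≤ n := by omega
        have hpar : αs p = α p t := ih p hple
        have hmem : h ∈ H.children p := by
          simp [Hierarchy.children, hr, hpdef]
        have h1 := hαs.2 p hplt
        have h2 := hsingle.2 p hplt
        by_contra hne
        have hex : ∃ c ∈ H.children p, αs c ≠ α c t := ⟨h, hmem, hne⟩
        have hex' : ∃ c ∈ H.children p, α c t ≠ αs c :=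
          ⟨h, hmem, fun e => hne e.symm⟩
        have hs1 : (∑ c ∈ H.children p, α c t) = αs p := by rw [hpar]; exact h2.1
        have hs2 : (∑ c ∈ H.children p, αs c) = α p t := by rw [← hpar]; exact h1.1
        have lt1 := h1.2 (fun c => α c t) hs1 hex'
        have lt2 := h2.2 αs hs2 hex
        simp only at lt1 lt2
        linarith
  exact funext fun h => key (H.level h) h le_rfl
end
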